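/- arXiv:1410.1619 — 3 statements merged into one kernel-verified Lean document; each statement's English description precedes it below -/
import Mathlib

section
/- Let H be a Hilbert space and U a standard operator algebra on H (a subalgebra of B(H) containing all finite-rank operators). Then every local derivation Δ : U → U is a spatial derivation: there exists a ∈ B(H) such that Δ(x) = ax − xa for all x ∈ U. -/
/-!
Abstract framework for the algebra `S = S(M,τ)` of τ-measurable operators affiliated
with a semi-finite von Neumann algebra `M` with faithful normal semi-finite trace `τ`.
`P` plays the role of the (complete) lattice of projections of `M`, `e : P → S` is the
inclusion of projections into `S`, `trace` is the trace on projections, `opNorm` is the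
operator norm (with value `∞` exactly off `M`, so that `M = {x | opNorm x < ∞}`),
`absOp` is the absolute value `x ↦ |x|`, `equiv` is Murray–von Neumann equivalence of
projections, `traceS` is the extension of the trace to positive operators, `absPow x p`
is `|x| ^ p` for real `p`, and `oc` is the orthocomplement `p ↦ 1 - p`.
-/

open scoped ENNReal

structure MeasurableOperatorFrame (S P : Type*) [Ring S] [StarRing S]
    [Algebra ℂ S] [PartialOrder S] [CompleteLattice P] where
  e : P → S
  e_mono : Monotone e
  e_inj : Function.Injective e
  e_bot : e ⊥ = 0
  e_top : e ⊤ = 1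
  e_idem : ∀ p, e p * e p = e p
  e_sa : ∀ p, star (e p) = e p
  e_mul_of_le : ∀ p q, p ≤ q → e p * e q = e p ∧ e q * e p = e p
  trace : P → ℝ≥0∞
  trace_mono : Monotone trace
  trace_bot : trace ⊥ = 0
  trace_sup_le : ∀ p q, trace (p ⊔ q) ≤ trace p + trace q
  trace_faithful : ∀ p, trace p = 0 → p = ⊥
  semifinite : sSup {p | trace p < ⊤} = ⊤
  finite_directed : DirectedOn (· ≤ ·) {p | trace p < ⊤}
  normal : ∀ (x : S) (Q : Set P), DirectedOn (· ≤ ·) Q →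
      (∀ p ∈ Q, x * e p = 0) → x * e (sSup Q) = 0
  r_spec : ∀ x : S, x * e (sInf {p | x * e p = x}) = x
  l_spec : ∀ x : S, e (sInf {p | e p * x = x}) * x = x
  trace_l_eq_r : ∀ x : S,
      trace (sInf {p | e p * x = x}) = trace (sInf {p | x * e p = x})
  absOp : S → S
  opNorm : S → ℝ≥0∞
  equiv : P → P → Prop
  traceS : S → ℝ≥0∞
  absPow : S → ℝ → S
  oc : P → P
  oc_e : ∀ p, e (oc p) = 1 - e p

namespace MeasurableOperatorFrame

variable {S P : Type*} [Ring S] [StarRing S] [Algebra ℂ S] [PartialOrder S]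
  [CompleteLattice P] (F : MeasurableOperatorFrame S P)

/-- The right support `r(x)` of `x ∈ S(M,τ)`. -/
def rsupp (x : S) : P := sInf {p | x * F.e p = x}

/-- The left support `l(x)` of `x ∈ S(M,τ)`. -/
def lsupp (x : S) : P := sInf {p | F.e p * x = x}

/-- The support `s(x) = l(x) ⊔ r(x)` of `x ∈ S(M,τ)`. -/
def supp (x : S) : P := F.lsupp x ⊔ F.rsupp x

/-- A projection `z` is central if (the image of) `z` commutes with everything. -/
def IsCentral (z : P) : Prop := ∀ x : S, F.e z * x = x * F.e z

/-- The von Neumann algebra `M = {x | opNorm x < ∞}` is abelian. -/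
def Abelian : Prop := ∀ x y : S, F.opNorm x < ⊤ → F.opNorm y < ⊤ → x * y = y * x

/-- `M` has no abelian direct summands: no nonzero central projection `z` has
commutative corner `z M z`. -/
def NoAbelianSummand : Prop := ∀ z : P, z ≠ ⊥ → F.IsCentral z →
    ¬ ∀ x y : S, F.opNorm x < ⊤ → F.opNorm y < ⊤ →
      (F.e z * x * F.e z) * (F.e z * y * F.e z) = (F.e z * y * F.e z) * (F.e z * x * F.e z)

/-- `M` is properly infinite: every nonzero central projection is infinite. -/
def ProperlyInfinite : Prop := ∀ z : P, z ≠ ⊥ → F.IsCentral z →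
    ∃ q : P, q ≤ z ∧ q ≠ z ∧ F.equiv q z

/-- The set `S₀(M,τ)` of τ-compact operators. -/
def tauCompact : Set S := {x | ∀ ε : ℝ, 0 < ε →
    ∃ p : P, F.trace (F.oc p) < ⊤ ∧ F.opNorm (x * F.e p) < ENNReal.ofReal ε}

/-- The Arens algebra `L^ω(M,τ) = ⋂_{p ≥ 1} L^p(M,τ)`. -/
def arens : Set S := {x | ∀ p : ℝ, 1 ≤ p → F.traceS (F.absPow x p) < ⊤}

/-- `L^ω₂(M,τ) = ⋂_{p ≥ 2} L^p(M,τ)`. -/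
def arens2 : Set S := {x | ∀ p : ℝ, 2 ≤ p → F.traceS (F.absPow x p) < ⊤}

end MeasurableOperatorFrame

/-- A derivation: a linear map satisfying the Leibniz rule. -/
def IsDerivation {R A : Type*} [CommSemiring R] [NonUnitalNonAssocRing A] [Module R A]
    (D : A →ₗ[R] A) : Prop := ∀ x y : A, D (x * y) = D x * y + x * D y

/-- A local derivation: a linear map agreeing at each point with some derivation. -/
def IsLocalDerivation {R A : Type*} [CommSemiring R] [NonUnitalNonAssocRing A] [Module R A]
    (Δ : A →ₗ[R] A) : Prop := ∀ x : A, ∃ D : A →ₗ[R] A, IsDerivation D ∧ Δ x = D x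

noncomputable section LocalDer
set_option linter.unusedSectionVars false

open scoped ComplexConjugate

local notation "⟪" x ", " y "⟫" => @inner ℂ _ _ x y

variable {H : Type*} [NormedAddCommGroup H] [InnerProductSpace ℂ H] [CompleteSpace H]

/-- rank one operator `ω ↦ ⟪ζ, ω⟫ • η`. -/
def rk1 (ζ η : H) : H →L[ℂ] H := (innerSL ℂ ζ).smulRight η

lemma rk1_apply (ζ η ω : H) : rk1 ζ η ω = ⟪ζ, ω⟫ • η := rfl

lemma rk1_add (ζ η η' : H) : rk1 ζ (η + η') = rk1 ζ η + rk1 ζ η' := by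
  ext ω; simp [rk1_apply, smul_add]

lemma rk1_smul (ζ : H) (s : ℂ) (η : H) : rk1 ζ (s • η) = s • rk1 ζ η := by
  ext ω
  simp only [rk1_apply, ContinuousLinearMap.smul_apply]
  exact smul_comm _ _ _

lemma rk1_zero (ζ : H) : rk1 ζ 0 = 0 := by ext ω; simp [rk1_apply]

lemma rk1_zero_left (η : H) : rk1 0 η = 0 := by ext ω; simp [rk1_apply]

lemma mul_rk1 (x : H →L[ℂ] H) (ζ η : H) : x * rk1 ζ η = rk1 ζ (x η) := by
  ext ω; simp [ContinuousLinearMap.mul_apply, rk1_apply, map_smul]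

variable {U : NonUnitalSubalgebra ℂ (H →L[ℂ] H)}

lemma rk1_mem (hU : ∀ f : H →L[ℂ] H,
      FiniteDimensional ℂ (LinearMap.range (f : H →ₗ[ℂ] H)) → f ∈ U) (ζ η : H) :
    rk1 ζ η ∈ U := by
  refine hU _ ?_
  have hle : LinearMap.range ((rk1 ζ η : H →L[ℂ] H) : H →ₗ[ℂ] H) ≤ Submodule.span ℂ {η} := by
    rintro - ⟨ω, rfl⟩
    exact Submodule.smul_mem _ _ (Submodule.mem_span_singleton_self η)
  exact Submodule.finiteDimensional_of_le hle

/-- the rank one operator as an element of `U`. -/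
def kelt (hmem : ∀ ζ η : H, rk1 ζ η ∈ U) (ζ η : H) : U := ⟨rk1 ζ η, hmem ζ η⟩

variable (hmem : ∀ ζ η : H, rk1 ζ η ∈ U)
include hmem

lemma kelt_coe (ζ η : H) : ((kelt hmem ζ η : U) : H →L[ℂ] H) = rk1 ζ η := rfl

lemma kelt_add (ζ η η' : H) :
    kelt hmem ζ (η + η') = kelt hmem ζ η + kelt hmem ζ η' :=
  Subtype.ext (rk1_add ζ η η')

lemma kelt_smul (ζ : H) (s : ℂ) (η : H) :
    kelt hmem ζ (s • η) = s • kelt hmem ζ η :=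
  Subtype.ext (rk1_smul ζ s η)

lemma kelt_zero (ζ : H) : kelt hmem ζ 0 = 0 := Subtype.ext (rk1_zero ζ)

lemma deriv_apply {e : H} (he : ⟪e, e⟫ = (1:ℂ)) (D : U →ₗ[ℂ] U)
    (hD : IsDerivation D) (x : U) (ξ : H) :
    ((D x : U) : H →L[ℂ] H) ξ
      = ((D (kelt hmem e ((x : H →L[ℂ] H) ξ)) : U) : H →L[ℂ] H) e
        - (x : H →L[ℂ] H) (((D (kelt hmem e ξ) : U) : H →L[ℂ] H) e) := by
  have h := hD x (kelt hmem e ξ)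
  have hx : x * kelt hmem e ξ = kelt hmem e ((x : H →L[ℂ] H) ξ) :=
    Subtype.ext (mul_rk1 _ _ _)
  rw [hx] at h
  have h3 := congrArg (fun z : U => ((z : U) : H →L[ℂ] H) e) h
  simp only [NonUnitalSubalgebra.coe_add, NonUnitalSubalgebra.coe_mul,
    ContinuousLinearMap.add_apply, ContinuousLinearMap.mul_apply, kelt_coe] at h3
  rw [rk1_apply, he, one_smul] at h3
  rw [h3]; abel

lemma local_ptwise {e : H} (he : ⟪e, e⟫ = (1:ℂ)) (Δ : U →ₗ[ℂ] U)
    (hΔ : IsLocalDerivation Δ) (x : U) :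
    ∃ b : H → H, b 0 = 0 ∧ (∀ (s : ℂ) ν, b (s • ν) = s • b ν) ∧
      ∀ ω, ((Δ x : U) : H →L[ℂ] H) ω
        = b ((x : H →L[ℂ] H) ω) - (x : H →L[ℂ] H) (b ω) := by
  obtain ⟨D, hD, hDx⟩ := hΔ x
  refine ⟨fun ν => ((D (kelt hmem e ν) : U) : H →L[ℂ] H) e, ?_, ?_, fun ω => ?_⟩
  · show ((D (kelt hmem e 0) : U) : H →L[ℂ] H) e = 0
    rw [kelt_zero hmem, map_zero]; simp
  · intro s ν
    show ((D (kelt hmem e (s • ν)) : U) : H →L[ℂ] H) e = _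
    rw [kelt_smul hmem, map_smul]; simp
  · rw [hDx]; exact deriv_apply hmem he D hD x ω

/-- the candidate implementing vector map. -/
def locC (Δ : U →ₗ[ℂ] U) (ε ν : H) : H := ((Δ (kelt hmem ε ν) : U) : H →L[ℂ] H) ε

lemma locC_add (Δ : U →ₗ[ℂ] U) (ε ν ν' : H) :
    locC hmem Δ ε (ν + ν') = locC hmem Δ ε ν + locC hmem Δ ε ν' := by
  unfold locC; rw [kelt_add hmem, map_add]; simp

lemma locC_smul (Δ : U →ₗ[ℂ] U) (ε : H) (s : ℂ) (ν : H) :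
    locC hmem Δ ε (s • ν) = s • locC hmem Δ ε ν := by
  unfold locC; rw [kelt_smul hmem, map_smul]; simp

lemma locC_zero (Δ : U →ₗ[ℂ] U) (ε : H) : locC hmem Δ ε 0 = 0 := by
  unfold locC; rw [kelt_zero hmem, map_zero]; simp

lemma locC_diag (Δ : U →ₗ[ℂ] U) (hΔ : IsLocalDerivation Δ) {ε : H}
    (hε : ⟪ε, ε⟫ = (1:ℂ)) : ⟪ε, locC hmem Δ ε ε⟫ = 0 := by
  obtain ⟨b, hb0, hbs, hb⟩ := local_ptwise hmem hε Δ hΔ (kelt hmem ε ε)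
  have h := hb ε
  have hk : (kelt hmem ε ε : H →L[ℂ] H) ε = ε := by
    rw [kelt_coe, rk1_apply, hε, one_smul]
  rw [hk] at h
  have : locC hmem Δ ε ε = b ε - (kelt hmem ε ε : H →L[ℂ] H) (b ε) := h
  rw [this, kelt_coe, rk1_apply]
  rw [inner_sub_right, inner_smul_right, hε]
  ring

omit hmem in
lemma lambda_trick {M : Type*} [AddCommGroup M] [Module ℂ M]
    (Λ : M → M → M)
    (hadd1 : ∀ a a' b, Λ (a + a') b = Λ a b + Λ a' b)
    (hsmul1 : ∀ (s : ℂ) a b, Λ (s • a) b = s • Λ a b)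
    (hadd2 : ∀ a b b', Λ a (b + b') = Λ a b + Λ a b')
    (hstruct : ∀ a b, ∃ q : ℂ, Λ a b = q • a)
    (hdiag : ∀ a, Λ a a = 0) :
    ∀ a b, Λ a b = 0 := by
  have hanti : ∀ a b, Λ a b = - Λ b a := by
    intro a b
    have h0 : Λ (a + b) (a + b) = 0 := hdiag _
    rw [hadd1, hadd2, hadd2, hdiag, hdiag, zero_add, add_zero] at h0
    exact eq_neg_of_add_eq_zero_left h0
  intro a b
  obtain ⟨q, hq⟩ := hstruct a b
  obtain ⟨q', hq'⟩ := hstruct b a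
  by_cases h : q = 0
  · rw [hq, h, zero_smul]
  · have h1 : q • a = -q' • b := by rw [← hq, neg_smul, ← hq', hanti]
    have ha : a = (q⁻¹ * -q') • b := by
      have h2 := congrArg (fun v => q⁻¹ • v) h1
      simpa [smul_smul, inv_mul_cancel₀ h] using h2
    rw [ha, hsmul1, hdiag, smul_zero]

lemma rk1_unit_formula (Δ : U →ₗ[ℂ] U) (hΔ : IsLocalDerivation Δ) {ε : H}
    (hε : ⟪ε, ε⟫ = (1:ℂ)) (η ω : H) :
    ((Δ (kelt hmem ε η) : U) : H →L[ℂ] H) ω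
      = ⟪ε, ω⟫ • locC hmem Δ ε η - ⟪ε, locC hmem Δ ε ω⟫ • η := by
  have key : ∀ η' : H, ∃ q : H → ℂ,
      (∀ ω', ((Δ (kelt hmem ε η') : U) : H →L[ℂ] H) ω'
          - ⟪ε, ω'⟫ • locC hmem Δ ε η' + ⟪ε, locC hmem Δ ε ω'⟫ • η' = q ω' • η')
        ∧ q η' = 0 := by
    intro η'
    obtain ⟨b, hb0, hbs, hb⟩ := local_ptwise hmem hε Δ hΔ (kelt hmem ε η')
    have hval : ∀ ω', ((Δ (kelt hmem ε η') : U) : H →L[ℂ] H) ω'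
        = ⟪ε, ω'⟫ • b η' - ⟪ε, b ω'⟫ • η' := by
      intro ω'
      rw [hb ω', kelt_coe, rk1_apply, rk1_apply, hbs]
    have hcη : locC hmem Δ ε η' = b η' - ⟪ε, b ε⟫ • η' := by
      have h := hval ε
      rw [hε, one_smul] at h
      exact h
    refine ⟨fun ω' => ⟪ε, ω'⟫ * ⟪ε, b ε⟫ - ⟪ε, b ω'⟫ + ⟪ε, locC hmem Δ ε ω'⟫,
      fun ω' => ?_, ?_⟩
    · rw [hval ω', hcη]
      module
    · show ⟪ε, η'⟫ * ⟪ε, b ε⟫ - ⟪ε, b η'⟫ + ⟪ε, locC hmem Δ ε η'⟫ = 0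
      rw [hcη, inner_sub_right, inner_smul_right]
      ring
  have hzero : ∀ η' ω', ((Δ (kelt hmem ε η') : U) : H →L[ℂ] H) ω'
      - ⟪ε, ω'⟫ • locC hmem Δ ε η' + ⟪ε, locC hmem Δ ε ω'⟫ • η' = 0 := by
    refine lambda_trick (fun a bb => ((Δ (kelt hmem ε a) : U) : H →L[ℂ] H) bb
        - ⟪ε, bb⟫ • locC hmem Δ ε a + ⟪ε, locC hmem Δ ε bb⟫ • a) ?_ ?_ ?_ ?_ ?_
    · intro a a' bb
      rw [kelt_add hmem, map_add, locC_add]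
      simp only [NonUnitalSubalgebra.coe_add, ContinuousLinearMap.add_apply]
      module
    · intro s a bb
      rw [kelt_smul hmem, map_smul, locC_smul]
      simp only [SetLike.val_smul, ContinuousLinearMap.coe_smul',
        Pi.smul_apply]
      module
    · intro a bb bb'
      rw [locC_add]
      simp only [map_add, inner_add_right]
      module
    · intro a bb
      obtain ⟨q, hq, -⟩ := key a
      exact ⟨q bb, hq bb⟩
    · intro a
      obtain ⟨q, hq, hq0⟩ := key a
      rw [hq a, hq0, zero_smul]
  have h := hzero η ω
  rw [eq_sub_iff_add_eq, ← sub_eq_zero]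
  rw [show ((Δ (kelt hmem ε η) : U) : H →L[ℂ] H) ω + ⟪ε, locC hmem Δ ε ω⟫ • η
      - ⟪ε, ω⟫ • locC hmem Δ ε η
      = ((Δ (kelt hmem ε η) : U) : H →L[ℂ] H) ω - ⟪ε, ω⟫ • locC hmem Δ ε η
        + ⟪ε, locC hmem Δ ε ω⟫ • η from by abel]
  exact h

lemma kelt_zero_left (η : H) : kelt hmem 0 η = 0 := Subtype.ext (rk1_zero_left η)

omit hmem in
lemma scalar_uniform {g : H → H} (hgadd : ∀ a b, g (a + b) = g a + g b)
    (hgsmul : ∀ (t : ℂ) a, g (t • a) = t • g a)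
    {ξ₀ : H} (hξ : ξ₀ ≠ 0)
    (hpt : ∀ a, ∃ t : ℂ, g a = t • a) :
    ∃ lam : ℂ, ∀ a, g a = lam • a := by
  obtain ⟨lam, hlam⟩ := hpt ξ₀
  refine ⟨lam, fun a => ?_⟩
  by_cases hdep : ∃ t : ℂ, a = t • ξ₀
  · obtain ⟨t, rfl⟩ := hdep
    rw [hgsmul, hlam, smul_smul, smul_smul, mul_comm]
  · obtain ⟨u, hu⟩ := hpt a
    obtain ⟨w, hw⟩ := hpt (a + ξ₀)
    rw [hgadd, hu, hlam, smul_add] at hw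
    by_cases h1 : w = u
    · subst h1
      have h2 : lam • ξ₀ = w • ξ₀ := add_left_cancel hw
      have h3 : lam = w := by
        have h4 : (lam - w) • ξ₀ = 0 := by rw [sub_smul, h2, sub_self]
        rcases smul_eq_zero.mp h4 with h5 | h5
        · exact sub_eq_zero.mp h5
        · exact absurd h5 hξ
      rw [hu, h3]
    · exfalso
      apply hdep
      have h2 : (u - w) • a = (w - lam) • ξ₀ := by
        linear_combination (norm := module) hw
      have h3 : u - w ≠ 0 := sub_ne_zero.mpr (fun h => h1 h.symm)
      exact ⟨(u - w)⁻¹ * (w - lam), by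
        rw [mul_smul, ← h2, smul_smul, inv_mul_cancel₀ h3, one_smul]⟩

omit hmem in
lemma inner_normalize {v : H} (hv : v ≠ 0) :
    ⟪(((‖v‖ : ℝ) : ℂ))⁻¹ • v, (((‖v‖ : ℝ) : ℂ))⁻¹ • v⟫ = (1:ℂ) := by
  have hr : ((‖v‖ : ℝ) : ℂ) ≠ 0 := by
    simpa [Complex.ofReal_ne_zero] using norm_ne_zero_iff.mpr hv
  rw [inner_smul_left, inner_smul_right, inner_self_eq_norm_sq_to_K,
    map_inv₀, Complex.conj_ofReal]
  field_simp
  rfl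

lemma locC_shift (Δ : U →ₗ[ℂ] U) (hΔ : IsLocalDerivation Δ) {ξ₀ ε : H}
    (h0 : ⟪ξ₀, ξ₀⟫ = (1:ℂ)) (hε : ⟪ε, ε⟫ = (1:ℂ)) (hperp : ⟪ξ₀, ε⟫ = 0) :
    ∃ lam : ℂ, ∀ η, locC hmem Δ ε η = locC hmem Δ ξ₀ η + lam • η := by
  have hperp' : ⟪ε, ξ₀⟫ = 0 := by rw [← inner_conj_symm, hperp, map_zero]
  have hξ0 : ξ₀ ≠ 0 := by
    intro h; rw [h, inner_zero_left] at h0; exact zero_ne_one h0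
  have hpt : ∀ η, ∃ t : ℂ, locC hmem Δ ε η - locC hmem Δ ξ₀ η = t • η := by
    intro η
    obtain ⟨b, hb0, hbs, hb⟩ :=
      local_ptwise hmem h0 Δ hΔ (kelt hmem ξ₀ η + kelt hmem ε η)
    have happ : ∀ ω, ((kelt hmem ξ₀ η + kelt hmem ε η : U) : H →L[ℂ] H) ω
        = ⟪ξ₀, ω⟫ • η + ⟪ε, ω⟫ • η := by
      intro ω
      simp [kelt_coe, rk1_apply]
    have hΔsum : ∀ ω, ((Δ (kelt hmem ξ₀ η + kelt hmem ε η) : U) : H →L[ℂ] H) ω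
        = ((Δ (kelt hmem ξ₀ η) : U) : H →L[ℂ] H) ω
          + ((Δ (kelt hmem ε η) : U) : H →L[ℂ] H) ω := by
      intro ω; rw [map_add]; simp
    have e1 := hb ξ₀
    rw [hΔsum, happ, happ, rk1_unit_formula hmem Δ hΔ h0,
      rk1_unit_formula hmem Δ hΔ hε, h0, hperp'] at e1
    simp only [one_smul, zero_smul, add_zero, zero_add] at e1
    have e2 := hb ε
    rw [hΔsum, happ, happ, rk1_unit_formula hmem Δ hΔ h0,
      rk1_unit_formula hmem Δ hΔ hε, hε, hperp] at e2
    simp only [one_smul, zero_smul, add_zero, zero_add] at e2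
    refine ⟨(⟪ξ₀, b ξ₀⟫ + ⟪ε, b ξ₀⟫ - ⟪ξ₀, locC hmem Δ ξ₀ ξ₀⟫ - ⟪ε, locC hmem Δ ε ξ₀⟫)
        - (⟪ξ₀, b ε⟫ + ⟪ε, b ε⟫ - ⟪ξ₀, locC hmem Δ ξ₀ ε⟫ - ⟪ε, locC hmem Δ ε ε⟫), ?_⟩
    linear_combination (norm := module) e2 - e1
  obtain ⟨lam, hlam⟩ := scalar_uniform
    (fun a b => by rw [locC_add hmem, locC_add hmem]; abel)
    (fun t a => by rw [locC_smul hmem, locC_smul hmem, smul_sub])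
    hξ0 hpt
  exact ⟨lam, fun η => by linear_combination (norm := module) hlam η⟩

lemma rk1_formula (Δ : U →ₗ[ℂ] U) (hΔ : IsLocalDerivation Δ) {ξ₀ : H}
    (h0 : ⟪ξ₀, ξ₀⟫ = (1:ℂ)) (ζ η ω : H) :
    ((Δ (kelt hmem ζ η) : U) : H →L[ℂ] H) ω
      = ⟪ζ, ω⟫ • locC hmem Δ ξ₀ η - ⟪ζ, locC hmem Δ ξ₀ ω⟫ • η := by
  have hinl : ∀ v : H, ⟪ζ, v⟫
      = (starRingEnd ℂ) ⟪ξ₀, ζ⟫ * ⟪ξ₀, v⟫ + ⟪ζ - ⟪ξ₀, ζ⟫ • ξ₀, v⟫ := by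
    intro v; rw [inner_sub_left, inner_smul_left]; ring
  have hperp : ⟪ξ₀, ζ - ⟪ξ₀, ζ⟫ • ξ₀⟫ = 0 := by
    rw [inner_sub_right, inner_smul_right, h0]; ring
  have hkel : kelt hmem ζ η
      = (starRingEnd ℂ) ⟪ξ₀, ζ⟫ • kelt hmem ξ₀ η
        + kelt hmem (ζ - ⟪ξ₀, ζ⟫ • ξ₀) η := by
    apply Subtype.ext
    ext v
    simp only [kelt_coe, rk1_apply, NonUnitalSubalgebra.coe_add, SetLike.val_smul,
      ContinuousLinearMap.add_apply, ContinuousLinearMap.coe_smul', Pi.smul_apply]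
    rw [hinl v]
    module
  by_cases hz : ζ - ⟪ξ₀, ζ⟫ • ξ₀ = 0
  · have hin0 : ∀ v, ⟪ζ, v⟫ = (starRingEnd ℂ) ⟪ξ₀, ζ⟫ * ⟪ξ₀, v⟫ := by
      intro v; rw [hinl v, hz, inner_zero_left, add_zero]
    rw [hkel, hz, kelt_zero_left hmem, add_zero, map_smul]
    have hcoe : (((starRingEnd ℂ) ⟪ξ₀, ζ⟫ • Δ (kelt hmem ξ₀ η) : U) : H →L[ℂ] H) ω
        = ((starRingEnd ℂ) ⟪ξ₀, ζ⟫)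
          • ((Δ (kelt hmem ξ₀ η) : U) : H →L[ℂ] H) ω := by
      simp
    rw [hcoe, rk1_unit_formula hmem Δ hΔ h0, hin0 ω, hin0 (locC hmem Δ ξ₀ ω)]
    module
  · have hεu : ⟪(((‖ζ - ⟪ξ₀, ζ⟫ • ξ₀‖ : ℝ) : ℂ))⁻¹ • (ζ - ⟪ξ₀, ζ⟫ • ξ₀),
        (((‖ζ - ⟪ξ₀, ζ⟫ • ξ₀‖ : ℝ) : ℂ))⁻¹ • (ζ - ⟪ξ₀, ζ⟫ • ξ₀)⟫ = (1:ℂ) :=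
      inner_normalize hz
    have hεperp : ⟪ξ₀,
        (((‖ζ - ⟪ξ₀, ζ⟫ • ξ₀‖ : ℝ) : ℂ))⁻¹ • (ζ - ⟪ξ₀, ζ⟫ • ξ₀)⟫ = 0 := by
      rw [inner_smul_right, hperp, mul_zero]
    obtain ⟨lam, hlam⟩ := locC_shift hmem Δ hΔ h0 hεu hεperp
    have hr : ((‖ζ - ⟪ξ₀, ζ⟫ • ξ₀‖ : ℝ) : ℂ) ≠ 0 := by
      simpa [Complex.ofReal_ne_zero] using norm_ne_zero_iff.mpr hz
    have hζ'ε : ∀ v, ⟪ζ - ⟪ξ₀, ζ⟫ • ξ₀, v⟫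
        = ((‖ζ - ⟪ξ₀, ζ⟫ • ξ₀‖ : ℝ) : ℂ)
          * ⟪(((‖ζ - ⟪ξ₀, ζ⟫ • ξ₀‖ : ℝ) : ℂ))⁻¹ • (ζ - ⟪ξ₀, ζ⟫ • ξ₀), v⟫ := by
      intro v
      rw [inner_smul_left, map_inv₀, Complex.conj_ofReal]
      field_simp
    have hkε : kelt hmem (ζ - ⟪ξ₀, ζ⟫ • ξ₀) η
        = ((‖ζ - ⟪ξ₀, ζ⟫ • ξ₀‖ : ℝ) : ℂ)
          • kelt hmem ((((‖ζ - ⟪ξ₀, ζ⟫ • ξ₀‖ : ℝ) : ℂ))⁻¹ • (ζ - ⟪ξ₀, ζ⟫ • ξ₀)) η := by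
      apply Subtype.ext
      ext v
      simp only [kelt_coe, rk1_apply, SetLike.val_smul,
        ContinuousLinearMap.coe_smul', Pi.smul_apply]
      rw [hζ'ε v]
      module
    rw [hkel, hkε, map_add, map_smul, map_smul]
    simp only [NonUnitalSubalgebra.coe_add, SetLike.val_smul,
      ContinuousLinearMap.add_apply, ContinuousLinearMap.coe_smul', Pi.smul_apply]
    rw [rk1_unit_formula hmem Δ hΔ h0, rk1_unit_formula hmem Δ hΔ hεu,
      hlam η, hlam ω, inner_add_right, inner_smul_right,
      hinl ω, hinl (locC hmem Δ ξ₀ ω), hζ'ε ω, hζ'ε (locC hmem Δ ξ₀ ω)]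
    module

lemma main_ne (Δ : U →ₗ[ℂ] U) (hΔ : IsLocalDerivation Δ) {ξ₀ : H}
    (h0 : ⟪ξ₀, ξ₀⟫ = (1:ℂ)) (y : U) (ω₀ : H) (hy : (y : H →L[ℂ] H) ω₀ ≠ 0) :
    ((Δ y : U) : H →L[ℂ] H) ω₀
      = locC hmem Δ ξ₀ ((y : H →L[ℂ] H) ω₀)
        - (y : H →L[ℂ] H) (locC hmem Δ ξ₀ ω₀) := by
  have claim : ∀ ζ : H, ⟪ζ, ω₀⟫ ≠ 0 → ∃ μ : H, ⟪ζ, μ⟫ = 0 ∧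
      ((Δ y : U) : H →L[ℂ] H) ω₀ - locC hmem Δ ξ₀ ((y : H →L[ℂ] H) ω₀)
        + (y : H →L[ℂ] H) (locC hmem Δ ξ₀ ω₀) = (y : H →L[ℂ] H) μ := by
    intro ζ hζ
    obtain ⟨b, hb0, hbs, hb⟩ := local_ptwise hmem h0 Δ hΔ
      (y + (-(⟪ζ, ω₀⟫)⁻¹) • kelt hmem ζ ((y : H →L[ℂ] H) ω₀))
    have hzapp : ∀ v, ((y + (-(⟪ζ, ω₀⟫)⁻¹) • kelt hmem ζ ((y : H →L[ℂ] H) ω₀) : U)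
          : H →L[ℂ] H) v
        = (y : H →L[ℂ] H) v
          + (-(⟪ζ, ω₀⟫)⁻¹ * ⟪ζ, v⟫) • ((y : H →L[ℂ] H) ω₀) := by
      intro v
      simp only [NonUnitalSubalgebra.coe_add, SetLike.val_smul,
        ContinuousLinearMap.add_apply, ContinuousLinearMap.coe_smul',
        Pi.smul_apply, kelt_coe, rk1_apply, smul_smul]
    have hz0 : ((y + (-(⟪ζ, ω₀⟫)⁻¹) • kelt hmem ζ ((y : H →L[ℂ] H) ω₀) : U)
          : H →L[ℂ] H) ω₀ = 0 := by
      rw [hzapp ω₀, show -(⟪ζ, ω₀⟫)⁻¹ * ⟪ζ, ω₀⟫ = -1 by field_simp, neg_one_smul]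
      abel
    have e1 := hb ω₀
    rw [hz0, hb0, zero_sub, hzapp] at e1
    have e2 : ((Δ (y + (-(⟪ζ, ω₀⟫)⁻¹) • kelt hmem ζ ((y : H →L[ℂ] H) ω₀)) : U)
          : H →L[ℂ] H) ω₀
        = ((Δ y : U) : H →L[ℂ] H) ω₀
          + (-(⟪ζ, ω₀⟫)⁻¹) • ((Δ (kelt hmem ζ ((y : H →L[ℂ] H) ω₀)) : U)
              : H →L[ℂ] H) ω₀ := by
      rw [map_add, map_smul]
      simp
    rw [e2, rk1_formula hmem Δ hΔ h0] at e1
    refine ⟨(locC hmem Δ ξ₀ ω₀ - b ω₀)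
        - ((⟪ζ, ω₀⟫)⁻¹ * ⟪ζ, locC hmem Δ ξ₀ ω₀ - b ω₀⟫) • ω₀, ?_, ?_⟩
    · rw [inner_sub_right, inner_smul_right]
      field_simp
      ring
    · rw [map_sub, map_sub, map_smul]
      have hinv : -(⟪ζ, ω₀⟫)⁻¹ * ⟪ζ, ω₀⟫ = -1 := by field_simp
      have e3 : (-(⟪ζ, ω₀⟫)⁻¹) • (⟪ζ, ω₀⟫ • locC hmem Δ ξ₀ ((y : H →L[ℂ] H) ω₀)
            - ⟪ζ, locC hmem Δ ξ₀ ω₀⟫ • ((y : H →L[ℂ] H) ω₀))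
          = -(locC hmem Δ ξ₀ ((y : H →L[ℂ] H) ω₀))
            + ((⟪ζ, ω₀⟫)⁻¹ * ⟪ζ, locC hmem Δ ξ₀ ω₀⟫) • ((y : H →L[ℂ] H) ω₀) := by
        rw [smul_sub, smul_smul, smul_smul, hinv, neg_one_smul]
        module
      rw [e3] at e1
      rw [inner_sub_right]
      linear_combination (norm := module) e1
  haveI : CompleteSpace (LinearMap.ker (y : H →L[ℂ] H)) :=
    by exact (ContinuousLinearMap.isClosed_ker (y : H →L[ℂ] H)).completeSpace_coe
  have hζsK : ω₀ - (Submodule.orthogonalProjection (LinearMap.ker ((y : H →L[ℂ] H) : H →ₗ[ℂ] H)) ω₀ : H)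
      ∈ (LinearMap.ker ((y : H →L[ℂ] H) : H →ₗ[ℂ] H))ᗮ :=
    by exact Submodule.sub_starProjection_mem_orthogonal ω₀
  have hζs0 : ω₀ - (Submodule.orthogonalProjection (LinearMap.ker ((y : H →L[ℂ] H) : H →ₗ[ℂ] H)) ω₀ : H) ≠ 0 := by
    intro h
    have : ω₀ ∈ LinearMap.ker ((y : H →L[ℂ] H) : H →ₗ[ℂ] H) := by
      rw [sub_eq_zero] at h
      rw [h]
      exact SetLike.coe_mem _
    exact hy (LinearMap.mem_ker.mp this)
  have hζsω : ⟪ω₀ - (Submodule.orthogonalProjection (LinearMap.ker ((y : H →L[ℂ] H) : H →ₗ[ℂ] H)) ω₀ : H), ω₀⟫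
      ≠ 0 := by
    have hrw : ⟪ω₀ - (Submodule.orthogonalProjection (LinearMap.ker ((y : H →L[ℂ] H) : H →ₗ[ℂ] H)) ω₀ : H), ω₀⟫
        = ⟪ω₀ - (Submodule.orthogonalProjection (LinearMap.ker ((y : H →L[ℂ] H) : H →ₗ[ℂ] H)) ω₀ : H),
            ω₀ - (Submodule.orthogonalProjection (LinearMap.ker ((y : H →L[ℂ] H) : H →ₗ[ℂ] H)) ω₀ : H)⟫ := by
      have h2 : ⟪ω₀ - (Submodule.orthogonalProjection (LinearMap.ker ((y : H →L[ℂ] H) : H →ₗ[ℂ] H)) ω₀ : H),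
          (Submodule.orthogonalProjection (LinearMap.ker ((y : H →L[ℂ] H) : H →ₗ[ℂ] H)) ω₀ : H)⟫ = 0 :=
        Submodule.inner_left_of_mem_orthogonal (SetLike.coe_mem _) hζsK
      rw [inner_sub_right, h2, sub_zero]
    rw [hrw]
    exact inner_self_ne_zero.mpr hζs0
  obtain ⟨μs, hμsperp, hμs⟩ := claim _ hζsω
  have horth : ∀ ζ, ζ ∈ (LinearMap.ker ((y : H →L[ℂ] H) : H →ₗ[ℂ] H))ᗮ → ⟪ζ, μs⟫ = 0 := by
    have step : ∀ ζ, ζ ∈ (LinearMap.ker ((y : H →L[ℂ] H) : H →ₗ[ℂ] H))ᗮ → ⟪ζ, ω₀⟫ ≠ 0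
        → ⟪ζ, μs⟫ = 0 := by
      intro ζ hζK hζω
      obtain ⟨μ, hμperp, hμ⟩ := claim ζ hζω
      have hker : μ - μs ∈ LinearMap.ker ((y : H →L[ℂ] H) : H →ₗ[ℂ] H) := by
        rw [LinearMap.mem_ker]
        show (y : H →L[ℂ] H) (μ - μs) = 0
        rw [map_sub, ← hμ, ← hμs, sub_self]
      have h1 : ⟪ζ, μ - μs⟫ = 0 :=
        Submodule.inner_left_of_mem_orthogonal hker hζK
      rw [inner_sub_right] at h1
      linear_combination hμperp - h1
    intro ζ hζK
    by_cases hc : ⟪ζ, ω₀⟫ = 0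
    · have h1 : ζ + (ω₀ - (Submodule.orthogonalProjection (LinearMap.ker ((y : H →L[ℂ] H) : H →ₗ[ℂ] H)) ω₀ : H))
          ∈ (LinearMap.ker ((y : H →L[ℂ] H) : H →ₗ[ℂ] H))ᗮ := add_mem hζK hζsK
      have h2 : ⟪ζ + (ω₀ - (Submodule.orthogonalProjection (LinearMap.ker ((y : H →L[ℂ] H) : H →ₗ[ℂ] H)) ω₀ : H)),
          ω₀⟫ ≠ 0 := by
        rw [inner_add_left, hc, zero_add]
        exact hζsω
      have h3 := step _ h1 h2
      rw [inner_add_left] at h3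
      linear_combination h3 - hμsperp
    · exact step ζ hζK hc
  have hμsK : μs ∈ LinearMap.ker ((y : H →L[ℂ] H) : H →ₗ[ℂ] H) := by
    have h5 : μs ∈ (LinearMap.ker ((y : H →L[ℂ] H) : H →ₗ[ℂ] H))ᗮᗮ :=
      Submodule.mem_orthogonal _ μs |>.mpr horth
    rwa [Submodule.orthogonal_orthogonal] at h5
  have h6 : (y : H →L[ℂ] H) μs = 0 := LinearMap.mem_ker.mp hμsK
  rw [h6] at hμs
  linear_combination (norm := module) hμs

lemma main_all (Δ : U →ₗ[ℂ] U) (hΔ : IsLocalDerivation Δ) {ξ₀ : H}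
    (h0 : ⟪ξ₀, ξ₀⟫ = (1:ℂ)) (x : U) (ω : H) :
    ((Δ x : U) : H →L[ℂ] H) ω
      = locC hmem Δ ξ₀ ((x : H →L[ℂ] H) ω)
        - (x : H →L[ℂ] H) (locC hmem Δ ξ₀ ω) := by
  have hξ0 : ξ₀ ≠ 0 := by
    intro h; rw [h, inner_zero_left] at h0; exact zero_ne_one h0
  by_cases hxω : (x : H →L[ℂ] H) ω ≠ 0
  · exact main_ne hmem Δ hΔ h0 x ω hxω
  push_neg at hxω
  by_cases hω : ω = 0
  · subst hω
    rw [hxω]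
    simp [locC_zero hmem]
  · have hζ0 : ⟪(⟪ω, ω⟫)⁻¹ • ω, ω⟫ = 1 := by
      rw [inner_smul_left, map_inv₀, inner_conj_symm,
        inv_mul_cancel₀ (inner_self_ne_zero.mpr hω)]
    have happ : ∀ v, ((x + kelt hmem ((⟪ω, ω⟫)⁻¹ • ω) ξ₀ : U) : H →L[ℂ] H) v
        = (x : H →L[ℂ] H) v + ⟪(⟪ω, ω⟫)⁻¹ • ω, v⟫ • ξ₀ := by
      intro v
      simp [kelt_coe, rk1_apply]
    have hx₁ω : ((x + kelt hmem ((⟪ω, ω⟫)⁻¹ • ω) ξ₀ : U) : H →L[ℂ] H) ω ≠ 0 := by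
      rw [happ ω, hxω, hζ0, zero_add, one_smul]
      exact hξ0
    have hmain := main_ne hmem Δ hΔ h0 _ ω hx₁ω
    rw [happ ω, hxω, hζ0, zero_add, one_smul] at hmain
    have hΔsum : ((Δ (x + kelt hmem ((⟪ω, ω⟫)⁻¹ • ω) ξ₀) : U) : H →L[ℂ] H) ω
        = ((Δ x : U) : H →L[ℂ] H) ω
          + ((Δ (kelt hmem ((⟪ω, ω⟫)⁻¹ • ω) ξ₀) : U) : H →L[ℂ] H) ω := by
      rw [map_add]; simp
    rw [hΔsum, happ (locC hmem Δ ξ₀ ω)] at hmain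
    have hr := rk1_formula hmem Δ hΔ h0 ((⟪ω, ω⟫)⁻¹ • ω) ξ₀ ω
    rw [hζ0, one_smul] at hr
    rw [hr] at hmain
    -- hmain : Δx ω + (c ξ₀ - ⟪ζ₀, c ω⟫ • ξ₀) = c ξ₀ - (x (c ω) + ⟪ζ₀, c ω⟫ • ξ₀)
    rw [hxω]
    rw [locC_zero hmem]
    linear_combination (norm := module) hmain

lemma locC_inner (Δ : U →ₗ[ℂ] U) (hΔ : IsLocalDerivation Δ) {ξ₀ : H}
    (h0 : ⟪ξ₀, ξ₀⟫ = (1:ℂ)) (ζ v : H) :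
    ⟪ζ, locC hmem Δ ξ₀ v⟫
      = ⟪ζ, v⟫ * ⟪ξ₀, locC hmem Δ ξ₀ ξ₀⟫
        - ⟪ξ₀, ((Δ (kelt hmem ζ ξ₀) : U) : H →L[ℂ] H) v⟫ := by
  have h := rk1_formula hmem Δ hΔ h0 ζ ξ₀ v
  have h2 : ⟪ξ₀, ((Δ (kelt hmem ζ ξ₀) : U) : H →L[ℂ] H) v⟫
      = ⟪ξ₀, ⟪ζ, v⟫ • locC hmem Δ ξ₀ ξ₀ - ⟪ζ, locC hmem Δ ξ₀ v⟫ • ξ₀⟫ := by rw [h]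
  rw [inner_sub_right, inner_smul_right, inner_smul_right, h0, mul_one] at h2
  linear_combination h2

lemma locC_continuous (Δ : U →ₗ[ℂ] U) (hΔ : IsLocalDerivation Δ) {ξ₀ : H}
    (h0 : ⟪ξ₀, ξ₀⟫ = (1:ℂ)) : Continuous (locC hmem Δ ξ₀) := by
  have hclin : Continuous (⇑(⟨⟨locC hmem Δ ξ₀, locC_add hmem Δ ξ₀⟩,
      locC_smul hmem Δ ξ₀⟩ : H →ₗ[ℂ] H)) := by
    apply LinearMap.continuous_of_isClosed_graph
    apply IsSeqClosed.isClosed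
    intro f p hf hfp
    rw [SetLike.mem_coe, LinearMap.mem_graph_iff]
    apply ext_inner_left ℂ
    intro ζ
    have hfst : Filter.Tendsto (fun n => (f n).1) Filter.atTop (nhds p.1) :=
      ((continuous_fst.tendsto p).comp hfp)
    have h1 : Filter.Tendsto (fun n => ⟪ζ, (f n).2⟫) Filter.atTop (nhds ⟪ζ, p.2⟫) :=
      tendsto_const_nhds.inner ((continuous_snd.tendsto p).comp hfp)
    have h2 : Filter.Tendsto (fun n => ⟪ζ, locC hmem Δ ξ₀ (f n).1⟫) Filter.atTop
        (nhds ⟪ζ, locC hmem Δ ξ₀ p.1⟫) := by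
      have hrw : ∀ w : H, ⟪ζ, locC hmem Δ ξ₀ w⟫
          = ⟪ζ, w⟫ * ⟪ξ₀, locC hmem Δ ξ₀ ξ₀⟫
            - ⟪ξ₀, ((Δ (kelt hmem ζ ξ₀) : U) : H →L[ℂ] H) w⟫ :=
        locC_inner hmem Δ hΔ h0 ζ
      simp only [hrw]
      exact ((tendsto_const_nhds.inner hfst).mul_const _).sub
        (tendsto_const_nhds.inner
          ((((Δ (kelt hmem ζ ξ₀) : U) : H →L[ℂ] H).continuous.tendsto _).comp hfst))
    have h3 : (fun n => ⟪ζ, (f n).2⟫) = fun n => ⟪ζ, locC hmem Δ ξ₀ (f n).1⟫ := by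
      funext n
      have := hf n
      rw [SetLike.mem_coe, LinearMap.mem_graph_iff] at this
      rw [this]
      rfl
    rw [h3] at h1
    exact tendsto_nhds_unique h1 h2
  exact hclin

lemma exists_spatial (Δ : U →ₗ[ℂ] U) (hΔ : IsLocalDerivation Δ) {ξ₀ : H}
    (h0 : ⟪ξ₀, ξ₀⟫ = (1:ℂ)) :
    ∃ a : H →L[ℂ] H, ∀ x : U,
      ((Δ x : U) : H →L[ℂ] H) = a * (x : H →L[ℂ] H) - (x : H →L[ℂ] H) * a := by
  refine ⟨⟨⟨⟨locC hmem Δ ξ₀, locC_add hmem Δ ξ₀⟩, locC_smul hmem Δ ξ₀⟩,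
    locC_continuous hmem Δ hΔ h0⟩, fun x => ?_⟩
  ext ω
  simp only [ContinuousLinearMap.sub_apply, ContinuousLinearMap.mul_apply,
    ContinuousLinearMap.coe_mk', LinearMap.coe_mk, AddHom.coe_mk]
  exact main_all hmem Δ hΔ h0 x ω

end LocalDer


/-- every local derivation on a standard operator algebra `U ⊆ B(H)`
(a subalgebra of `B(H)` containing all finite-rank operators) is a spatial derivation,
implemented by some `a ∈ B(H)`: `Δ(x) = a x - x a`. -/
theorem standardAlgebra_localDerivation_spatial {H : Type*} [NormedAddCommGroup H]
    [InnerProductSpace ℂ H] [CompleteSpace H]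
    (U : NonUnitalSubalgebra ℂ (H →L[ℂ] H))
    (hU : ∀ f : H →L[ℂ] H,
      FiniteDimensional ℂ (LinearMap.range (f : H →ₗ[ℂ] H)) → f ∈ U)
    (Δ : U →ₗ[ℂ] U) (hΔ : IsLocalDerivation Δ) :
    ∃ a : H →L[ℂ] H, ∀ x : U, ((Δ x : U) : H →L[ℂ] H) = a * x - x * a := by
  rcases subsingleton_or_nontrivial H with hsub | hnt
  · refine ⟨0, fun x => ?_⟩
    ext ω
    exact Subsingleton.elim _ _
  · obtain ⟨v, hv⟩ := exists_ne (0 : H)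
    obtain ⟨a, ha⟩ := exists_spatial (rk1_mem hU) Δ hΔ (inner_normalize hv)
    exact ⟨a, ha⟩
end

section
/- Let A be an algebra, Δ a local derivation on A whose restriction to a two-sided ideal I is a derivation and which maps I into I. Let x ∈ I, y ∈ A, and let p ∈ I be an idempotent with xyp = xy, Δ(xy)p = Δ(xy), Δ(x)y·p = Δ(x)y, and xΔ(y)p = xΔ(y). Then Δ(xy) = Δ(x)y + xΔ(y). -/
/-!
Abstract framework for the algebra `S = S(M,τ)` of τ-measurable operators affiliated
with a semi-finite von Neumann algebra `M` with faithful normal semi-finite trace `τ`.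
`P` plays the role of the (complete) lattice of projections of `M`, `e : P → S` is the
inclusion of projections into `S`, `trace` is the trace on projections, `opNorm` is the
operator norm (with value `∞` exactly off `M`, so that `M = {x | opNorm x < ∞}`),
`absOp` is the absolute value `x ↦ |x|`, `equiv` is Murray–von Neumann equivalence of
projections, `traceS` is the extension of the trace to positive operators, `absPow x p`
is `|x| ^ p` for real `p`, and `oc` is the orthocomplement `p ↦ 1 - p`.
-/

open scoped ENNReal

/-- let `Δ` be a local derivation on `A` mapping a two-sided ideal `I`
into itself and restricting to a derivation on `I`. If `x ∈ I`, `y ∈ A`, and `p ∈ I` is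
an idempotent absorbing `x y`, `Δ(x y)`, `Δ(x) y` and `x Δ(y)` on the right, then the
Leibniz rule `Δ(x y) = Δ(x) y + x Δ(y)` holds at `(x, y)`. -/
theorem leibniz_at_of_absorbing_idempotent {K A : Type*} [Field K] [Ring A] [Module K A]
    (Δ : A →ₗ[K] A) (hΔ : IsLocalDerivation Δ)
    (I : TwoSidedIdeal A) (hΔI : ∀ a ∈ I, Δ a ∈ I)
    (hLeibI : ∀ a ∈ I, ∀ b ∈ I, Δ (a * b) = Δ a * b + a * Δ b)
    (x y : A) (hx : x ∈ I) (p : A) (hpI : p ∈ I) (hp : p * p = p)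
    (h1 : x * y * p = x * y) (h2 : Δ (x * y) * p = Δ (x * y))
    (h3 : Δ x * y * p = Δ x * y) (h4 : x * Δ y * p = x * Δ y) :
    Δ (x * y) = Δ x * y + x * Δ y := by
  have hxyI : x * y ∈ I := I.mul_mem_right _ _ hx
  have hypI : y * p ∈ I := I.mul_mem_left _ _ hpI
  -- Step 1: x*y*Δ p = 0
  have e1 : x * y * Δ p = 0 := by
    have h := hLeibI (x * y) hxyI p hpI
    rw [h1, h2] at h
    exact (left_eq_add.mp h)
  -- Step 2: x * Δ (y*p) * p = x * Δ (y*p)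
  have e2 : x * Δ (y * p) * p = x * Δ (y * p) := by
    have h := hLeibI (y * p) hypI p hpI
    rw [show y * p * p = y * p by rw [mul_assoc, hp]] at h
    have key : x * Δ (y * p) = x * Δ (y * p) * p + x * y * Δ p := by
      calc x * Δ (y * p) = x * (Δ (y * p) * p + y * p * Δ p) := by rw [← h]
        _ = x * Δ (y * p) * p + x * y * p * Δ p := by noncomm_ring
        _ = x * Δ (y * p) * p + x * y * Δ p := by rw [h1]
    rw [e1, add_zero] at key
    exact key.symm
  -- Step 3: x * Δ y = x * Δ (y * p)
  obtain ⟨D, hD, hDval⟩ := hΔ (y - y * p)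
  have hD1 : D 1 = 0 := by
    have h := hD 1 1
    simp only [mul_one, one_mul] at h
    exact right_eq_add.mp h
  have hpDp : p * D p * p = 0 := by
    have h := hD p p
    rw [hp] at h
    have key : p * D p * p = p * D p * p + p * D p * p := by
      calc p * D p * p = p * (D p * p + p * D p) * p := by rw [← h]
        _ = p * D p * (p * p) + (p * p) * (D p * p) := by noncomm_ring
        _ = p * D p * p + p * D p * p := by rw [hp]; noncomm_ring
    exact (left_eq_add.mp key)
  have e3 : x * Δ y = x * Δ (y * p) := by
    have hsub : y - y * p = y * (1 - p) := by noncomm_ring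
    have hDyp : D (y - y * p) = D y * (1 - p) + y * (D 1 - D p) := by
      rw [hsub, hD y (1 - p), map_sub]
    have key : x * Δ (y - y * p) * p = 0 := by
      rw [hDval, hDyp, hD1]
      rw [show x * (D y * (1 - p) + y * (0 - D p)) * p
          = x * D y * (p - p * p) - x * y * (D p * p) by noncomm_ring]
      rw [hp, sub_self, mul_zero, zero_sub, ← h1]
      rw [show x * y * p * (D p * p) = x * y * (p * D p * p) by noncomm_ring]
      rw [hpDp, mul_zero, neg_zero]
    have expand : x * Δ (y - y * p) * p = x * Δ y * p - x * Δ (y * p) * p := by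
      rw [map_sub]; noncomm_ring
    rw [expand, h4, e2] at key
    exact sub_eq_zero.mp key
  -- Conclusion
  have h := hLeibI x hx (y * p) hypI
  rw [← mul_assoc, h1] at h
  rw [h, ← mul_assoc, h3, ← e3]
end

section
/- Let A be an algebra and Δ a linear map on A such that Δ(uv) = Δ(u)v + uΔ(v) whenever at least one of u, v belongs to a two-sided ideal I. Suppose Q is a set of idempotents contained in I such that aq = 0 for all q ∈ Q implies a = 0. Then Δ is a derivation on A. -/
/-!
Abstract framework for the algebra `S = S(M,τ)` of τ-measurable operators affiliated
with a semi-finite von Neumann algebra `M` with faithful normal semi-finite trace `τ`.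
`P` plays the role of the (complete) lattice of projections of `M`, `e : P → S` is the
inclusion of projections into `S`, `trace` is the trace on projections, `opNorm` is the
operator norm (with value `∞` exactly off `M`, so that `M = {x | opNorm x < ∞}`),
`absOp` is the absolute value `x ↦ |x|`, `equiv` is Murray–von Neumann equivalence of
projections, `traceS` is the extension of the trace to positive operators, `absPow x p`
is `|x| ^ p` for real `p`, and `oc` is the orthocomplement `p ↦ 1 - p`.
-/

open scoped ENNReal

/-- let `Δ` be a linear map on `A` satisfying the Leibniz rule whenever
at least one of the two factors lies in a two-sided ideal `I`, and let `Q ⊆ I` be a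
right-separating family of idempotents (`a q = 0` for all `q ∈ Q` implies `a = 0`).
Then `Δ` is a derivation on all of `A`. -/
theorem derivation_of_leibniz_on_ideal {K A : Type*} [Field K] [Ring A] [Module K A]
    (Δ : A →ₗ[K] A) (I : TwoSidedIdeal A)
    (hLeib : ∀ u v : A, u ∈ I ∨ v ∈ I → Δ (u * v) = Δ u * v + u * Δ v)
    (Q : Set A) (hQI : ∀ q ∈ Q, q ∈ I) (hidem : ∀ q ∈ Q, q * q = q)
    (hsep : ∀ a : A, (∀ q ∈ Q, a * q = 0) → a = 0) :
    IsDerivation Δ := by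
  intro x y
  apply sub_eq_zero.mp
  apply hsep
  intro q hq
  have hqI := hQI q hq
  have h1 : Δ (x * y * q) = Δ (x * y) * q + (x * y) * Δ q :=
    hLeib _ _ (Or.inr hqI)
  have h2 : Δ (x * (y * q)) = Δ x * (y * q) + x * Δ (y * q) :=
    hLeib _ _ (Or.inr (I.mul_mem_left _ _ hqI))
  have h3 : Δ (y * q) = Δ y * q + y * Δ q := hLeib _ _ (Or.inr hqI)
  have h4 : Δ (x * y) * q + x * y * Δ q = Δ x * (y * q) + x * (Δ y * q + y * Δ q) := by
    rw [← h3, ← h2, ← h1, mul_assoc]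
  rw [sub_mul, sub_eq_zero]
  have h5 : Δ (x * y) * q = Δ x * (y * q) + x * (Δ y * q + y * Δ q) - x * y * Δ q :=
    eq_sub_of_add_eq h4
  rw [h5]
  noncomm_ring
end
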